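/- Decomposition theorem: Let C be a category with a variance (E,M), and let G : E → D and H : M → D be (covariant) functors that agree on objects and satisfy H(f^m)∘G(f^e) = G(f_e)∘H(f_m) for each morphism f of C. Then there exists a unique functor F : C → D restricting to G on E and to H on M; explicitly F(f) = H(f^m)∘G(f^e). -/

import Mathlib

open CategoryTheory

universe v u v₂ u₂

/-- A variance `(E,M)` on a category `C`: wide subcategories such that both `(E,M)` and
`(M,E)` are strict factorization systems.  The chosen terminating factorization of `f` is
`f = tm f ∘ te f` (i.e. `f = f^m ∘ f^e`) through the object `tObj f` (the terminating
object `f_t`), and the chosen starting factorization is `f = se f ∘ sm f`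
(i.e. `f = f_e ∘ f_m`) through `sObj f` (the starting object `f_s`). -/
structure Variance (C : Type u) [Category.{v} C] where
  E : MorphismProperty C
  M : MorphismProperty C
  E_id : ∀ X : C, E (𝟙 X)
  M_id : ∀ X : C, M (𝟙 X)
  E_comp : ∀ {X Y Z : C} (f : X ⟶ Y) (g : Y ⟶ Z), E f → E g → E (f ≫ g)
  M_comp : ∀ {X Y Z : C} (f : X ⟶ Y) (g : Y ⟶ Z), M f → M g → M (f ≫ g)
  tObj : ∀ {X Y : C}, (X ⟶ Y) → C
  te : ∀ {X Y : C} (f : X ⟶ Y), X ⟶ tObj f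
  tm : ∀ {X Y : C} (f : X ⟶ Y), tObj f ⟶ Y
  te_mem : ∀ {X Y : C} (f : X ⟶ Y), E (te f)
  tm_mem : ∀ {X Y : C} (f : X ⟶ Y), M (tm f)
  t_fac : ∀ {X Y : C} (f : X ⟶ Y), te f ≫ tm f = f
  t_uniq : ∀ {X Y : C} (f : X ⟶ Y) (Z : C) (e : X ⟶ Z) (m : Z ⟶ Y),
      E e → M m → e ≫ m = f →
      (⟨Z, e, m⟩ : Σ Z : C, (X ⟶ Z) × (Z ⟶ Y)) = ⟨tObj f, te f, tm f⟩
  sObj : ∀ {X Y : C}, (X ⟶ Y) → C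
  sm : ∀ {X Y : C} (f : X ⟶ Y), X ⟶ sObj f
  se : ∀ {X Y : C} (f : X ⟶ Y), sObj f ⟶ Y
  sm_mem : ∀ {X Y : C} (f : X ⟶ Y), M (sm f)
  se_mem : ∀ {X Y : C} (f : X ⟶ Y), E (se f)
  s_fac : ∀ {X Y : C} (f : X ⟶ Y), sm f ≫ se f = f
  s_uniq : ∀ {X Y : C} (f : X ⟶ Y) (Z : C) (m : X ⟶ Z) (e : Z ⟶ Y),
      M m → E e → m ≫ e = f →
      (⟨Z, m, e⟩ : Σ Z : C, (X ⟶ Z) × (Z ⟶ Y)) = ⟨sObj f, sm f, se f⟩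

namespace Variance

variable {C : Type u} [Category.{v} C] (V : Variance C)

lemma tObj_of_E {X Y : C} (f : X ⟶ Y) (h : V.E f) : V.tObj f = Y :=
  (congrArg Sigma.fst (V.t_uniq f Y f (𝟙 Y) h (V.M_id Y) (Category.comp_id f))).symm

lemma tObj_of_M {X Y : C} (f : X ⟶ Y) (h : V.M f) : V.tObj f = X :=
  (congrArg Sigma.fst (V.t_uniq f X (𝟙 X) f (V.E_id X) h (Category.id_comp f))).symm

lemma sObj_of_M {X Y : C} (f : X ⟶ Y) (h : V.M f) : V.sObj f = Y :=
  (congrArg Sigma.fst (V.s_uniq f Y f (𝟙 Y) h (V.E_id Y) (Category.comp_id f))).symm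

lemma sObj_of_E {X Y : C} (f : X ⟶ Y) (h : V.E f) : V.sObj f = X :=
  (congrArg Sigma.fst (V.s_uniq f X (𝟙 X) f (V.M_id X) h (Category.id_comp f))).symm

lemma tObj_id (X : C) : V.tObj (𝟙 X) = X := V.tObj_of_E _ (V.E_id X)

lemma sObj_id (X : C) : V.sObj (𝟙 X) = X := V.sObj_of_E _ (V.E_id X)

lemma s_comp_aux {x y z : C} (f : x ⟶ y) (g : y ⟶ z) :
    (V.sm f ≫ V.sm (V.se f ≫ V.sm g)) ≫ V.se (V.se f ≫ V.sm g) ≫ V.se g = f ≫ g := by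
  have h : V.sm (V.se f ≫ V.sm g) ≫ V.se (V.se f ≫ V.sm g) = V.se f ≫ V.sm g :=
    V.s_fac _
  rw [Category.assoc, ← Category.assoc (V.sm (V.se f ≫ V.sm g)), h]
  simp only [Category.assoc]
  rw [V.s_fac g, ← Category.assoc, V.s_fac f]

lemma t_comp_aux {x y z : C} (f : x ⟶ y) (g : y ⟶ z) :
    (V.te f ≫ V.te (V.tm f ≫ V.te g)) ≫ V.tm (V.tm f ≫ V.te g) ≫ V.tm g = f ≫ g := by
  have h : V.te (V.tm f ≫ V.te g) ≫ V.tm (V.tm f ≫ V.te g) = V.tm f ≫ V.te g :=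
    V.t_fac _
  rw [Category.assoc, ← Category.assoc (V.te (V.tm f ≫ V.te g)), h]
  simp only [Category.assoc]
  rw [V.t_fac g, ← Category.assoc, V.t_fac f]

/-- `(gf)_s = (g_m f_e)_s`. -/
lemma sObj_comp {x y z : C} (f : x ⟶ y) (g : y ⟶ z) :
    V.sObj (f ≫ g) = V.sObj (V.se f ≫ V.sm g) :=
  (congrArg Sigma.fst (V.s_uniq (f ≫ g) (V.sObj (V.se f ≫ V.sm g))
    (V.sm f ≫ V.sm (V.se f ≫ V.sm g)) (V.se (V.se f ≫ V.sm g) ≫ V.se g)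
    (V.M_comp _ _ (V.sm_mem f) (V.sm_mem _))
    (V.E_comp _ _ (V.se_mem _) (V.se_mem g)) (V.s_comp_aux f g))).symm

/-- `(gf)_t = (g^e f^m)_t`. -/
lemma tObj_comp {x y z : C} (f : x ⟶ y) (g : y ⟶ z) :
    V.tObj (f ≫ g) = V.tObj (V.tm f ≫ V.te g) :=
  (congrArg Sigma.fst (V.t_uniq (f ≫ g) (V.tObj (V.tm f ≫ V.te g))
    (V.te f ≫ V.te (V.tm f ≫ V.te g)) (V.tm (V.tm f ≫ V.te g) ≫ V.tm g)
    (V.E_comp _ _ (V.te_mem f) (V.te_mem _))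
    (V.M_comp _ _ (V.tm_mem _) (V.tm_mem g)) (V.t_comp_aux f g))).symm

end Variance

section Decomposition

variable {C : Type u} [Category.{v} C] {D : Type u₂} [Category.{v₂} D] (V : Variance C)

/-- `F : C ⥤ D` extends the compatible pair of covariant functors `(G, H)` defined on `E`
and `M` respectively (sharing the object assignment `obj`). -/
def Extends (obj : C → D)
    (Gmap : ∀ {X Y : C} (f : X ⟶ Y), V.E f → (obj X ⟶ obj Y))
    (Hmap : ∀ {X Y : C} (f : X ⟶ Y), V.M f → (obj X ⟶ obj Y)) (F : C ⥤ D) : Prop :=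
  ∃ h : ∀ X : C, F.obj X = obj X,
    (∀ {X Y : C} (f : X ⟶ Y) (hf : V.E f),
        F.map f = eqToHom (h X) ≫ Gmap f hf ≫ eqToHom (h Y).symm) ∧
    (∀ {X Y : C} (f : X ⟶ Y) (hf : V.M f),
        F.map f = eqToHom (h X) ≫ Hmap f hf ≫ eqToHom (h Y).symm)

/-- Decomposition theorem: a compatible pair of covariant functors `G : E ⥤ D`,
`H : M ⥤ D` agreeing on objects and satisfying `H(f^m)∘G(f^e) = G(f_e)∘H(f_m)` extends to a
unique functor `F : C ⥤ D`, explicitly given by `F(f) = H(f^m)∘G(f^e)`. -/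
theorem decomposition
    (obj : C → D)
    (Gmap : ∀ {X Y : C} (f : X ⟶ Y), V.E f → (obj X ⟶ obj Y))
    (Gid : ∀ X : C, Gmap (𝟙 X) (V.E_id X) = 𝟙 (obj X))
    (Gcomp : ∀ {X Y Z : C} (f : X ⟶ Y) (g : Y ⟶ Z) (hf : V.E f) (hg : V.E g),
      Gmap (f ≫ g) (V.E_comp f g hf hg) = Gmap f hf ≫ Gmap g hg)
    (Hmap : ∀ {X Y : C} (f : X ⟶ Y), V.M f → (obj X ⟶ obj Y))
    (Hid : ∀ X : C, Hmap (𝟙 X) (V.M_id X) = 𝟙 (obj X))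
    (Hcomp : ∀ {X Y Z : C} (f : X ⟶ Y) (g : Y ⟶ Z) (hf : V.M f) (hg : V.M g),
      Hmap (f ≫ g) (V.M_comp f g hf hg) = Hmap f hf ≫ Hmap g hg)
    (compat : ∀ {X Y : C} (f : X ⟶ Y),
      Gmap (V.te f) (V.te_mem f) ≫ Hmap (V.tm f) (V.tm_mem f) =
        Hmap (V.sm f) (V.sm_mem f) ≫ Gmap (V.se f) (V.se_mem f)) :
    (∃! F : C ⥤ D, Extends V obj Gmap Hmap F) ∧
    ∀ F : C ⥤ D, Extends V obj Gmap Hmap F →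
      ∃ h : ∀ X : C, F.obj X = obj X, ∀ {X Y : C} (f : X ⟶ Y),
        F.map f = eqToHom (h X) ≫ Gmap (V.te f) (V.te_mem f) ≫
          Hmap (V.tm f) (V.tm_mem f) ≫ eqToHom (h Y).symm := by
  -- Key: any (E,M)-factorization of f gives the same composite.
  have tkey : ∀ {X Y : C} (f : X ⟶ Y) (Z : C) (e : X ⟶ Z) (m : Z ⟶ Y)
      (he : V.E e) (hm : V.M m), e ≫ m = f →
      Gmap e he ≫ Hmap m hm =
        Gmap (V.te f) (V.te_mem f) ≫ Hmap (V.tm f) (V.tm_mem f) := by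
    intro X Y f Z e m he hm hc
    have aux : ∀ (p : Σ Z : C, (X ⟶ Z) × (Z ⟶ Y)) (he' : V.E p.2.1) (hm' : V.M p.2.2),
        p = ⟨V.tObj f, V.te f, V.tm f⟩ →
        Gmap p.2.1 he' ≫ Hmap p.2.2 hm' =
          Gmap (V.te f) (V.te_mem f) ≫ Hmap (V.tm f) (V.tm_mem f) := by
      rintro p he' hm' rfl; rfl
    exact aux ⟨Z, e, m⟩ he hm (V.t_uniq f Z e m he hm hc)
  have skey : ∀ {X Y : C} (f : X ⟶ Y) (Z : C) (m : X ⟶ Z) (e : Z ⟶ Y)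
      (hm : V.M m) (he : V.E e), m ≫ e = f →
      Hmap m hm ≫ Gmap e he =
        Gmap (V.te f) (V.te_mem f) ≫ Hmap (V.tm f) (V.tm_mem f) := by
    intro X Y f Z m e hm he hc
    have aux : ∀ (p : Σ Z : C, (X ⟶ Z) × (Z ⟶ Y)) (hm' : V.M p.2.1) (he' : V.E p.2.2),
        p = ⟨V.sObj f, V.sm f, V.se f⟩ →
        Hmap p.2.1 hm' ≫ Gmap p.2.2 he' =
          Hmap (V.sm f) (V.sm_mem f) ≫ Gmap (V.se f) (V.se_mem f) := by
      rintro p hm' he' rfl; rfl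
    rw [aux ⟨Z, m, e⟩ hm he (V.s_uniq f Z m e hm he hc), ← compat f]
  -- The candidate map.
  let Fm : ∀ {X Y : C}, (X ⟶ Y) → (obj X ⟶ obj Y) :=
    fun {X Y} f => Gmap (V.te f) (V.te_mem f) ≫ Hmap (V.tm f) (V.tm_mem f)
  have hFm : ∀ {X Y : C} (f : X ⟶ Y),
      Fm f = Gmap (V.te f) (V.te_mem f) ≫ Hmap (V.tm f) (V.tm_mem f) := fun _ => rfl
  have Fm_id : ∀ X : C, Fm (𝟙 X) = 𝟙 (obj X) := by
    intro X
    rw [hFm _, ← tkey (𝟙 X) X (𝟙 X) (𝟙 X) (V.E_id X) (V.M_id X) (Category.comp_id _),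
      Gid, Hid, Category.comp_id]
  have Fm_E : ∀ {X Y : C} (f : X ⟶ Y) (hf : V.E f), Fm f = Gmap f hf := by
    intro X Y f hf
    rw [hFm _, ← tkey f Y f (𝟙 Y) hf (V.M_id Y) (Category.comp_id _), Hid,
      Category.comp_id]
  have Fm_M : ∀ {X Y : C} (f : X ⟶ Y) (hf : V.M f), Fm f = Hmap f hf := by
    intro X Y f hf
    rw [hFm _, ← tkey f X (𝟙 X) f (V.E_id X) hf (Category.id_comp _), Gid,
      Category.id_comp]
  have Fm_comp : ∀ {X Y Z : C} (f : X ⟶ Y) (g : Y ⟶ Z), Fm (f ≫ g) = Fm f ≫ Fm g := by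
    intro X Y Z f g
    have h1 := tkey (f ≫ g) (V.tObj (V.tm f ≫ V.te g))
      (V.te f ≫ V.te (V.tm f ≫ V.te g)) (V.tm (V.tm f ≫ V.te g) ≫ V.tm g)
      (V.E_comp _ _ (V.te_mem f) (V.te_mem _))
      (V.M_comp _ _ (V.tm_mem _) (V.tm_mem g)) (V.t_comp_aux f g)
    have h2 := skey (V.tm f ≫ V.te g) _ (V.tm f) (V.te g) (V.tm_mem f) (V.te_mem g) rfl
    rw [hFm (f ≫ g), hFm f, hFm g, ← h1, Gcomp, Hcomp, Category.assoc,
      ← Category.assoc (Gmap (V.te (V.tm f ≫ V.te g)) _), ← h2]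
    · simp only [Category.assoc]
    · exact V.tm_mem _
    · exact V.tm_mem g
    · exact V.te_mem f
    · exact V.te_mem _
  -- The functor.
  let F : C ⥤ D :=
    { obj := obj
      map := fun f => Fm f
      map_id := Fm_id
      map_comp := fun f g => Fm_comp f g }
  have hFE : Extends V obj Gmap Hmap F := by
    refine ⟨fun _ => rfl, fun {X Y} f hf => ?_, fun {X Y} f hf => ?_⟩
    · simpa using Fm_E f hf
    · simpa using Fm_M f hf
  -- Any extension has the explicit formula.
  have key : ∀ F' : C ⥤ D, Extends V obj Gmap Hmap F' →
      ∃ h : ∀ X : C, F'.obj X = obj X, ∀ {X Y : C} (f : X ⟶ Y),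
        F'.map f = eqToHom (h X) ≫ Gmap (V.te f) (V.te_mem f) ≫
          Hmap (V.tm f) (V.tm_mem f) ≫ eqToHom (h Y).symm := by
    rintro F' ⟨h, hE, hM⟩
    refine ⟨h, fun {X Y} f => ?_⟩
    conv_lhs => rw [← V.t_fac f]
    rw [F'.map_comp, hE _ (V.te_mem f), hM _ (V.tm_mem f)]
    simp
  refine ⟨⟨F, hFE, ?_⟩, key⟩
  intro F' hF'
  obtain ⟨h, hmap⟩ := key F' hF'
  refine CategoryTheory.Functor.ext h (fun X Y f => ?_)
  rw [hmap f, show F.map f = Gmap (V.te f) (V.te_mem f) ≫ Hmap (V.tm f) (V.tm_mem f)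
    from rfl]
  simp only [Category.assoc]

end Decomposition
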